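/- Let X be a Grothendieck category satisfying (AB4*) (products are exact), let Y be a localizing subcategory of X, and let π : X → X/Y be the quotient functor. If Z is a closed subcategory of X which is Y-essentially stable, then π(Z) = {π(M) : M ∈ Z} is a closed subcategory of X/Y. -/
import Mathlib


open CategoryTheory CategoryTheory.Limits Opposite

universe v u

namespace Paper

variable {C : Type u} [Category.{v} C]

/-- An object `M` is compact if `Hom(M, -)` commutes with arbitrary (small) direct sums. -/
def IsCompactObj (M : C) : Prop :=
  ∀ ι : Type v, Nonempty (PreservesColimitsOfShape (Discrete ι) (coyoneda.obj (op M)))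

variable [Abelian C]

section
variable [HasColimits C]

/-- A full subcategory (given by its set of objects) is weakly closed if it is closed
under subobjects, quotient objects and arbitrary (small) direct sums. -/
structure IsWeaklyClosed (Z : Set C) : Prop where
  mem_of_mono : ∀ {A M : C} (f : A ⟶ M), Mono f → M ∈ Z → A ∈ Z
  mem_of_epi : ∀ {M B : C} (f : M ⟶ B), Epi f → M ∈ Z → B ∈ Z
  sigma_mem : ∀ {ι : Type v} (f : ι → C), (∀ i, f i ∈ Z) → (∐ f) ∈ Z

/-- Closure under arbitrary (small) products. -/
def ClosedUnderProducts [HasLimits C] (Z : Set C) : Prop :=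
  ∀ {ι : Type v} (f : ι → C), (∀ i, f i ∈ Z) → (∏ᶜ f) ∈ Z

/-- A closed subcategory: weakly closed and closed under products. -/
def IsClosedSub [HasLimits C] (Z : Set C) : Prop :=
  IsWeaklyClosed Z ∧ ClosedUnderProducts Z

/-- Closure under extensions. -/
def ClosedUnderExtensions (Y : Set C) : Prop :=
  ∀ S : ShortComplex C, S.ShortExact → S.X₁ ∈ Y → S.X₃ ∈ Y → S.X₂ ∈ Y

/-- A localizing subcategory: weakly closed and closed under extensions. -/
def IsLocalizing (Y : Set C) : Prop :=
  IsWeaklyClosed Y ∧ ClosedUnderExtensions Y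

/-- The full subcategory generated by a class of objects `G`: all quotient objects
of (small) direct sums of objects of `G`. -/
def generatedBy (G : Set C) : Set C :=
  { M | ∃ (ι : Type v) (f : ι → C), (∀ i, f i ∈ G) ∧ ∃ p : (∐ f) ⟶ M, Epi p }

end

/-- A filter of subobjects of an object: nonempty, upward closed, and closed under
finite intersections. -/
def IsFilterOn {O : C} (F : Set (Subobject O)) : Prop :=
  F.Nonempty ∧ (∀ {I J : Subobject O}, I ∈ F → I ≤ J → J ∈ F) ∧
    ∀ {I J : Subobject O}, I ∈ F → J ∈ F → I ⊓ J ∈ F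

/-- A principal filter consists of all subobjects containing a fixed one. -/
def IsPrincipalFilter {O : C} (F : Set (Subobject O)) : Prop :=
  ∃ I : Subobject O, F = { J | I ≤ J }

variable {A : Type v}

/-- A filter system in a family of objects. -/
def IsFilterSystem (O : A → C) (F : ∀ α, Set (Subobject (O α))) : Prop :=
  (∀ α, IsFilterOn (F α)) ∧
    ∀ (α β : A) (f : O α ⟶ O β), ∀ J ∈ F β, (Subobject.pullback f).obj J ∈ F α

/-- An ideal in a family of generators: a choice of subobject `I α ⊆ O α` for each `α`
such that `f (I α) ⊆ I β` for every morphism `f : O α ⟶ O β`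
(expressed as `I α ≤ f⁻¹ (I β)`). -/
def IsIdealIn (O : A → C) (I : ∀ α, Subobject (O α)) : Prop :=
  ∀ (α β : A) (f : O α ⟶ O β), I α ≤ (Subobject.pullback f).obj (I β)

/-- The quotient object `O/I` of `O` by a subobject `I`. -/
noncomputable def quotBy {O : C} (I : Subobject O) : C := cokernel I.arrow

/-- The weakly closed subcategory generated by the objects `O α / I`, `I ∈ F α`. -/
def wcOfFilterSystem [HasColimits C] (O : A → C) (F : ∀ α, Set (Subobject (O α))) : Set C :=
  generatedBy { M | ∃ (α : A) (I : Subobject (O α)), I ∈ F α ∧ Nonempty (quotBy I ≅ M) }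

/-- The filter system associated to a subcategory `Z`: `F α = {I | O α / I ∈ Z}`. -/
def filterOf (O : A → C) (Z : Set C) (α : A) : Set (Subobject (O α)) :=
  { I | quotBy I ∈ Z }

section QuotientCat

variable {D : Type u} [Category.{v} D]

/-- The image `π(Z)` of a subcategory, as a full subcategory of the target
(closed under isomorphism). -/
def imageSub (π : C ⥤ D) (Z : Set C) : Set D := { N | ∃ M ∈ Z, Nonempty (π.obj M ≅ N) }

/-- The preimage `π⁻¹(𝒵)` of a subcategory. -/
def preimageSub (π : C ⥤ D) (Z : Set D) : Set C := { M | π.obj M ∈ Z }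

/-- `M` is `Y`-torsionfree if it has no nonzero subobject belonging to `Y`. -/
def IsTorsionFree (Y : Set C) (M : C) : Prop :=
  ∀ (N : C) (f : N ⟶ M), Mono f → N ∈ Y → IsZero N

/-- `Z` is `Y`-essentially stable if `ωπ(M) ∈ Z` for all `M ∈ Z`. -/
def EssStable (π : C ⥤ D) (ω : D ⥤ C) (Z : Set C) : Prop :=
  ∀ M ∈ Z, ω.obj (π.obj M) ∈ Z

/-- `Z'`: the full subcategory generated by the `Y`-torsionfree objects of `Z`. -/
def torsPart [HasColimits C] (Y Z : Set C) : Set C :=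
  generatedBy { M | M ∈ Z ∧ IsTorsionFree Y M }

/-- `Z` is `Y`-torsionfree generated if every object of `Z` is a quotient of a direct sum
of `Y`-torsionfree objects of `Z`. -/
def TorsionfreeGenerated [HasColimits C] (Y Z : Set C) : Prop :=
  Z ⊆ torsPart Y Z

/-- `Z` is `Y`-weakly closed: weakly closed, `Y`-essentially stable
and `Y`-torsionfree generated. -/
def IsYWeaklyClosed [HasColimits C] (π : C ⥤ D) (ω : D ⥤ C) (Y Z : Set C) : Prop :=
  IsWeaklyClosed Z ∧ EssStable π ω Z ∧ TorsionfreeGenerated Y Z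

/-- `Z` is `Y`-closed: closed, `Y`-essentially stable and `Y`-torsionfree generated. -/
def IsYClosed [HasLimits C] [HasColimits C] (π : C ⥤ D) (ω : D ⥤ C) (Y Z : Set C) : Prop :=
  IsClosedSub Z ∧ EssStable π ω Z ∧ TorsionfreeGenerated Y Z

end QuotientCat

/-- The Gabriel product `Z * W`: all objects `P` fitting in a short exact sequence
`0 → M → P → N → 0` with `M ∈ W` and `N ∈ Z`. -/
def gabrielProd (Z W : Set C) : Set C :=
  { P | ∃ S : ShortComplex C, S.ShortExact ∧ S.X₁ ∈ W ∧ S.X₃ ∈ Z ∧ Nonempty (S.X₂ ≅ P) }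

/-- `Isat` is the `Y`-saturation of `I` inside `O`: the largest subobject `J ⊇ I`
with `J/I ∈ Y`; that is, `Isat/I = τ(O/I)`. -/
def IsSaturationOf (Y : Set C) {O : C} (I Isat : Subobject O) : Prop :=
  ∃ h : I ≤ Isat, cokernel (Subobject.ofLE I Isat h) ∈ Y ∧
    ∀ (J : Subobject O) (hJ : I ≤ J), cokernel (Subobject.ofLE I J hJ) ∈ Y → J ≤ Isat


/-- The subcategory generated by the objects `O α / I α` for an ideal `I`. -/
def wcOfIdeal [HasColimits C] (O : A → C) (I : ∀ α, Subobject (O α)) : Set C :=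
  generatedBy { M | ∃ α : A, Nonempty (quotBy (I α) ≅ M) }

/-- The union `Z₁ ∪ Z₂` of two weakly closed subcategories: explicitly, all
subquotients of objects `M ⊞ N` with `M ∈ Z₁` and `N ∈ Z₂`. -/
def unionWC (Z₁ Z₂ : Set C) : Set C :=
  { P | ∃ (M N Q : C) (i : Q ⟶ M ⊞ N) (p : Q ⟶ P), M ∈ Z₁ ∧ N ∈ Z₂ ∧ Mono i ∧ Epi p }

/-- If `X` satisfies (AB4*) and `Z` is a closed subcategory of `X` which
is `Y`-essentially stable, then `π(Z)` is a closed subcategory of `X/Y`. -/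
theorem statement_9 {X : Type u} [Category.{v} X] [Abelian X]
    [HasLimits X] [HasColimits X] [HasFilteredColimits X] [AB5 X]
    [HasProducts X] [AB4Star X]
    (hgen : ∃ G : X, IsSeparator G)
    {D : Type u} [Category.{v} D] [Abelian D] [HasLimits D] [HasColimits D]
    (Y : Set X) (hYloc : IsLocalizing Y)
    (π : X ⥤ D) (ω : D ⥤ X) (adj : π ⊣ ω) [PreservesFiniteLimits π]
    [ω.Full] [ω.Faithful]
    (hker : ∀ M : X, M ∈ Y ↔ IsZero (π.obj M))
    (Z : Set X) (hZ : IsClosedSub Z) (hZes : EssStable π ω Z) :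
    IsClosedSub (imageSub π Z) := by
  have hπc : PreservesColimits π := adj.leftAdjoint_preservesColimits
  have hωl : PreservesLimits ω := adj.rightAdjoint_preservesLimits
  -- Z is closed under isomorphism
  have hiso : ∀ {M N : X}, (M ≅ N) → N ∈ Z → M ∈ Z := by
    intro M N e hN
    exact hZ.1.mem_of_mono e.hom inferInstance hN
  -- πω ≅ id
  have hcounit : ∀ N : D, IsIso (adj.counit.app N) := fun N => inferInstance
  constructor
  · constructor
    · -- subobjects
      rintro A N f hf ⟨M, hM, ⟨e⟩⟩
      refine ⟨ω.obj A, ?_, ⟨(asIso (adj.counit.app A)).symm.symm⟩⟩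
      have : Mono f := hf
      have hmono : Mono (ω.map f) := inferInstance
      exact hZ.1.mem_of_mono (ω.map f)
        inferInstance (hiso (ω.mapIso e.symm) (hZes M hM))
    · -- quotients
      rintro N B f hf ⟨M, hM, ⟨e⟩⟩
      have : Epi f := hf
      set g : M ⟶ ω.obj B := adj.homEquiv M B (e.hom ≫ f) with hg
      have hgeq : π.map g ≫ adj.counit.app B = e.hom ≫ f := by
        simpa [hg, Adjunction.homEquiv_unit] using
          ((adj.homEquiv M B).symm_apply_apply (e.hom ≫ f))
      have hπg : Epi (π.map g) := by
        have h2 : π.map g = (e.hom ≫ f) ≫ inv (adj.counit.app B) := by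
          rw [← hgeq]; simp
        rw [h2]; infer_instance
      -- factor g through its image
      have him : image g ∈ Z := hZ.1.mem_of_epi (factorThruImage g) inferInstance hM
      have hfac : π.map (factorThruImage g) ≫ π.map (image.ι g) = π.map g := by
        rw [← π.map_comp, image.fac]
      have hepiι : Epi (π.map (image.ι g)) := by
        have : Epi (π.map (factorThruImage g) ≫ π.map (image.ι g)) := by
          rw [hfac]; exact hπg
        exact epi_of_epi (π.map (factorThruImage g)) (π.map (image.ι g))
      have hmonoι : Mono (π.map (image.ι g)) := π.map_mono (image.ι g)
      have : IsIso (π.map (image.ι g)) := isIso_of_mono_of_epi _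
      exact ⟨image g, him, ⟨asIso (π.map (image.ι g)) ≪≫ asIso (adj.counit.app B)⟩⟩
    · -- direct sums
      intro ι f hf
      choose M hM e using hf
      refine ⟨∐ M, hZ.1.sigma_mem M hM, ⟨?_⟩⟩
      exact (PreservesCoproduct.iso π M) ≪≫
        Sigma.mapIso (fun i => (e i).some)
  · -- products
    intro ι f hf
    choose M hM e using hf
    have hωf : ∀ i, ω.obj (f i) ∈ Z := fun i =>
      hiso ((ω.mapIso ((e i).some)).symm ≪≫ ω.mapIso (Iso.refl _)) (hZes (M i) (hM i))
    have hP : (∏ᶜ fun i => ω.obj (f i)) ∈ Z := hZ.2 _ hωf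
    have hωprod : ω.obj (∏ᶜ f) ∈ Z :=
      hiso (PreservesProduct.iso ω f) hP
    exact ⟨ω.obj (∏ᶜ f), hωprod, ⟨asIso (adj.counit.app (∏ᶜ f))⟩⟩

end Paper
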